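/- arXiv:2405.06723 — 6 statements merged into one kernel-verified Lean document; each statement's English description precedes it below -/
import Mathlib

section
/- (L² bound for the Fourier transform of the convolution, determinantal form.) Let n ≥ 2 and let α, β ∈ ℝ^n. Then the series Σ_{l ∈ ℤ^n, l_1 > l_2 > … > l_{n−1} > l_n = 0} |det[exp(2πi α_r l_s)]_{1≤r,s≤n}|² · |det[exp(2πi β_r l_s)]_{1≤r,s≤n}|² / Δ(l)² converges (has finite sum). -/
open scoped BigOperators

noncomputable section

/-- The set of pairs `(r,s)` with `r < s` in `Fin n`. -/
def pairsLt (n : ℕ) : Finset (Fin n × Fin n) :=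
  Finset.univ.filter (fun p => p.1 < p.2)

/-- Vandermonde determinant `Δ(I) = ∏_{r<s} (I_r − I_s)` of an integer tuple. -/
def vandZ {n : ℕ} (I : Fin n → ℤ) : ℤ := ∏ p ∈ pairsLt n, (I p.1 - I p.2)

/-- Strictly decreasing integer tuples whose last entry is `0`. -/
def DecSet (n : ℕ) : Set (Fin n → ℤ) :=
  {I | (∀ r s : Fin n, r < s → I s < I r) ∧ (∀ r : Fin n, (r : ℕ) = n - 1 → I r = 0)}

/-- `2πi` as a complex number. -/
def twoPiI : ℂ := 2 * (Real.pi : ℂ) * Complex.I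

/-- Bound on the determinant of a matrix with unit entries. -/
lemma det_norm_le_fac {n : ℕ} (A : Matrix (Fin n) (Fin n) ℂ)
    (h : ∀ i j, ‖A i j‖ = 1) : ‖A.det‖ ≤ (n.factorial : ℝ) := by
  rw [Matrix.det_apply]
  calc ‖∑ σ : Equiv.Perm (Fin n), Equiv.Perm.sign σ • ∏ i, A (σ i) i‖
      ≤ ∑ σ : Equiv.Perm (Fin n), ‖Equiv.Perm.sign σ • ∏ i, A (σ i) i‖ := norm_sum_le _ _
    _ ≤ ∑ _σ : Equiv.Perm (Fin n), (1:ℝ) := by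
        refine Finset.sum_le_sum fun σ _ => ?_
        have hp : ‖∏ i, A (σ i) i‖ = 1 := by rw [norm_prod]; simp [h]
        rcases Int.units_eq_one_or (Equiv.Perm.sign σ) with hs | hs <;>
          simp [hs, hp]
    _ = (n.factorial : ℝ) := by simp [Finset.card_univ, Fintype.card_perm]

/-- Summability of the product of `1/(vᵢ+1)²` over tuples of naturals. -/
lemma summable_gfun : ∀ m : ℕ, Summable (fun v : Fin m → ℕ => ∏ i, (1:ℝ)/(((v i : ℝ) + 1)^2))
  | 0 => by
      have he : (fun v : Fin 0 → ℕ => ∏ i, (1:ℝ)/(((v i:ℝ) + 1)^2)) = fun _ => 1 := by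
        funext v; simp
      rw [he]
      haveI : Finite (Fin 0 → ℕ) := Finite.of_subsingleton
      exact Summable.of_finite
  | (m+1) => by
      have ih := summable_gfun m
      have h1 : Summable (fun k : ℕ => (1:ℝ)/(((k:ℝ)+1)^2)) := by
        have h0 : Summable (fun n : ℕ => (1:ℝ)/(n:ℝ)^2) :=
          Real.summable_one_div_nat_pow.mpr one_lt_two
        have := h0.comp_injective Nat.succ_injective
        exact this.congr fun k => by push_cast [Function.comp_def, one_div]; ring
      have h2 := h1.mul_of_nonneg ih (fun k => by positivity) (fun v => by positivity)
      have h3 := h2.comp_injective (Fin.consEquiv (fun _ : Fin (m+1) => ℕ)).symm.injective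
      refine h3.congr fun v => ?_
      simp [Function.comp, Fin.prod_univ_succ, Fin.consEquiv, Fin.tail, mul_comm]

set_option maxHeartbeats 1000000 in
/-- For any `n ≥ 2` and `α, β ∈ ℝ^n`, the series
`Σ_{l_1 > … > l_{n-1} > l_n = 0} |det[e^{2πi α_r l_s}]|² |det[e^{2πi β_r l_s}]|² / Δ(l)²`
converges. -/
theorem statement3 (n : ℕ) (hn : 2 ≤ n) (α β : Fin n → ℝ) :
    Summable (fun l : DecSet n =>
      ‖(Matrix.of fun r s : Fin n =>
          Complex.exp (twoPiI * (α r : ℂ) * ((l.1 s : ℤ) : ℂ))).det‖ ^ 2 *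
      ‖(Matrix.of fun r s : Fin n =>
          Complex.exp (twoPiI * (β r : ℂ) * ((l.1 s : ℤ) : ℂ))).det‖ ^ 2 /
      ((vandZ l.1 : ℝ) ^ 2)) := by
  obtain ⟨m, rfl⟩ : ∃ m, n = m + 1 := ⟨n - 1, by omega⟩
  set C : ℝ := ((m+1).factorial : ℝ)^2 * ((m+1).factorial : ℝ)^2 with hC
  have hCpos : 0 < C := by positivity
  -- gaps are at least 1
  have gap_pos : ∀ (l : DecSet (m+1)) (i : Fin m), 1 ≤ l.1 i.castSucc - l.1 i.succ := by
    intro l i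
    have := l.2.1 i.castSucc i.succ (Fin.castSucc_lt_succ (i := i))
    omega
  set Φ : DecSet (m+1) → (Fin m → ℕ) :=
    fun l i => (l.1 i.castSucc - l.1 i.succ).toNat - 1 with hΦ
  have Φinj : Function.Injective Φ := by
    intro l l' h
    have key : ∀ i : Fin (m+1), l.1 i = l'.1 i := by
      intro i
      induction i using Fin.reverseInduction with
      | last => rw [l.2.2 _ (by simp), l'.2.2 _ (by simp)]
      | cast i ih =>
          have hg := congrFun h i
          have h1 := gap_pos l i
          have h2 := gap_pos l' i
          simp only [hΦ] at hg
          omega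
    exact Subtype.ext (funext key)
  -- Vandermonde bound
  have hvand : ∀ l : DecSet (m+1),
      (∏ i : Fin m, (l.1 i.castSucc - l.1 i.succ)) ≤ vandZ l.1 ∧
      1 ≤ ∏ i : Fin m, (l.1 i.castSucc - l.1 i.succ) := by
    intro l
    have hfac : ∀ p ∈ pairsLt (m+1), 1 ≤ l.1 p.1 - l.1 p.2 := by
      intro p hp
      have hlt : p.1 < p.2 := by simpa [pairsLt] using hp
      have := l.2.1 p.1 p.2 hlt
      omega
    have hone : ∀ T : Finset (Fin (m+1) × Fin (m+1)),
        (∀ p ∈ T, (1:ℤ) ≤ l.1 p.1 - l.1 p.2) → 1 ≤ ∏ p ∈ T, (l.1 p.1 - l.1 p.2) := by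
      intro T hT
      calc (1:ℤ) = ∏ _p ∈ T, 1 := by simp
        _ ≤ ∏ p ∈ T, (l.1 p.1 - l.1 p.2) := Finset.prod_le_prod (by simp) hT
    set S : Finset (Fin (m+1) × Fin (m+1)) :=
      Finset.univ.image (fun i : Fin m => (i.castSucc, i.succ)) with hS
    have hSsub : S ⊆ pairsLt (m+1) := by
      intro p hp
      simp only [hS, Finset.mem_image] at hp
      obtain ⟨i, _, rfl⟩ := hp
      simp [pairsLt, Fin.castSucc_lt_succ]
    have hprodS : ∏ p ∈ S, (l.1 p.1 - l.1 p.2)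
        = ∏ i : Fin m, (l.1 i.castSucc - l.1 i.succ) := by
      rw [hS, Finset.prod_image]
      intro i _ j _ hij
      exact Fin.succ_injective _ (congrArg Prod.snd hij)
    constructor
    · rw [← hprodS, vandZ, ← Finset.prod_sdiff hSsub]
      have h1 : 1 ≤ ∏ p ∈ pairsLt (m+1) \ S, (l.1 p.1 - l.1 p.2) :=
        hone _ (fun p hp => hfac p (Finset.mem_sdiff.mp hp).1)
      have h0 : 0 ≤ ∏ p ∈ S, (l.1 p.1 - l.1 p.2) :=
        le_trans zero_le_one (hone _ fun p hp => hfac p (hSsub hp))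
      exact le_mul_of_one_le_left h0 h1
    · rw [← hprodS]
      exact hone _ fun p hp => hfac p (hSsub hp)
  -- comparison
  have hsum : Summable (fun l : DecSet (m+1) => C * ∏ i, (1:ℝ)/(((Φ l i : ℝ) + 1)^2)) := by
    have h1 := (summable_gfun m).comp_injective Φinj
    exact h1.mul_left C
  have hle : ∀ l : DecSet (m+1),
      ‖(Matrix.of fun r s : Fin (m+1) =>
          Complex.exp (twoPiI * (α r : ℂ) * ((l.1 s : ℤ) : ℂ))).det‖ ^ 2 *
      ‖(Matrix.of fun r s : Fin (m+1) =>
          Complex.exp (twoPiI * (β r : ℂ) * ((l.1 s : ℤ) : ℂ))).det‖ ^ 2 /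
      ((vandZ l.1 : ℝ) ^ 2) ≤ C * ∏ i, (1:ℝ)/(((Φ l i : ℝ) + 1)^2) := by
    intro l
    obtain ⟨hPv, hP1⟩ := hvand l
    set P : ℤ := ∏ i : Fin m, (l.1 i.castSucc - l.1 i.succ) with hPdef
    have hPpos : (0:ℝ) < (P:ℝ) := by exact_mod_cast lt_of_lt_of_le zero_lt_one hP1
    have hDge : (P:ℝ) ≤ (vandZ l.1 : ℝ) := by exact_mod_cast hPv
    have hDpos : (0:ℝ) < (vandZ l.1 : ℝ) := lt_of_lt_of_le hPpos hDge
    -- the majorant equals C / P^2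
    have hmaj : (∏ i, (1:ℝ)/(((Φ l i : ℝ) + 1)^2)) = 1 / (P:ℝ)^2 := by
      have hterm : ∀ i : Fin m,
          ((Φ l i : ℝ) + 1) = ((l.1 i.castSucc - l.1 i.succ : ℤ) : ℝ) := by
        intro i
        have hg := gap_pos l i
        have : (Φ l i : ℤ) + 1 = l.1 i.castSucc - l.1 i.succ := by
          simp only [hΦ]; omega
        push_cast [← this]
        ring
      have hProd : (P:ℝ) = ∏ i, ((Φ l i : ℝ) + 1) := by
        rw [hPdef]
        push_cast
        exact Finset.prod_congr rfl (fun i _ => by rw [hterm i]; push_cast; ring)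
      calc (∏ i, (1:ℝ)/(((Φ l i : ℝ) + 1)^2))
          = ∏ i, ((((Φ l i : ℝ) + 1))^2)⁻¹ := by simp [one_div]
        _ = (∏ i, (((Φ l i : ℝ) + 1))^2)⁻¹ := Finset.prod_inv_distrib _
        _ = ((∏ i, (((Φ l i : ℝ) + 1)))^2)⁻¹ := by rw [Finset.prod_pow]
        _ = 1 / (P:ℝ)^2 := by rw [← hProd]; simp [one_div]
    rw [hmaj]
    -- numerator bound
    have hA : ‖(Matrix.of fun r s : Fin (m+1) =>
        Complex.exp (twoPiI * (α r : ℂ) * ((l.1 s : ℤ) : ℂ))).det‖ ≤ ((m+1).factorial : ℝ) := by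
      refine det_norm_le_fac _ fun i j => ?_
      have hz : twoPiI * (α i : ℂ) * ((l.1 j : ℤ) : ℂ)
          = ((2*Real.pi*(α i)*((l.1 j : ℤ):ℝ) : ℝ):ℂ) * Complex.I := by
        push_cast [twoPiI]; ring
      rw [Matrix.of_apply, hz, Complex.norm_exp_ofReal_mul_I]
    have hB : ‖(Matrix.of fun r s : Fin (m+1) =>
        Complex.exp (twoPiI * (β r : ℂ) * ((l.1 s : ℤ) : ℂ))).det‖ ≤ ((m+1).factorial : ℝ) := by
      refine det_norm_le_fac _ fun i j => ?_
      have hz : twoPiI * (β i : ℂ) * ((l.1 j : ℤ) : ℂ)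
          = ((2*Real.pi*(β i)*((l.1 j : ℤ):ℝ) : ℝ):ℂ) * Complex.I := by
        push_cast [twoPiI]; ring
      rw [Matrix.of_apply, hz, Complex.norm_exp_ofReal_mul_I]
    have hnum : ‖(Matrix.of fun r s : Fin (m+1) =>
        Complex.exp (twoPiI * (α r : ℂ) * ((l.1 s : ℤ) : ℂ))).det‖ ^ 2 *
        ‖(Matrix.of fun r s : Fin (m+1) =>
        Complex.exp (twoPiI * (β r : ℂ) * ((l.1 s : ℤ) : ℂ))).det‖ ^ 2 ≤ C := by
      rw [hC]
      have h1 := norm_nonneg ((Matrix.of fun r s : Fin (m+1) =>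
        Complex.exp (twoPiI * (α r : ℂ) * ((l.1 s : ℤ) : ℂ))).det)
      have h2 := norm_nonneg ((Matrix.of fun r s : Fin (m+1) =>
        Complex.exp (twoPiI * (β r : ℂ) * ((l.1 s : ℤ) : ℂ))).det)
      exact mul_le_mul (pow_le_pow_left₀ h1 hA 2) (pow_le_pow_left₀ h2 hB 2)
        (by positivity) (by positivity)
    have hfin : ‖(Matrix.of fun r s : Fin (m+1) =>
        Complex.exp (twoPiI * (α r : ℂ) * ((l.1 s : ℤ) : ℂ))).det‖ ^ 2 *
        ‖(Matrix.of fun r s : Fin (m+1) =>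
        Complex.exp (twoPiI * (β r : ℂ) * ((l.1 s : ℤ) : ℂ))).det‖ ^ 2 /
        ((vandZ l.1 : ℝ) ^ 2) ≤ C / (P:ℝ)^2 :=
      div_le_div₀ hCpos.le hnum (by positivity) (pow_le_pow_left₀ hPpos.le hDge 2)
    refine le_trans hfin (le_of_eq ?_)
    ring
  exact Summable.of_nonneg_of_le (fun l => by positivity) hle hsum
end
end

section
/- For every n ≥ 2, the series V_n = Σ_{λ ∈ ℤ^n, λ_1 > λ_2 > … > λ_{n−1} > λ_n = 0} ∏_{1≤r<s≤n} (λ_r − λ_s)^{−2} converges (has finite sum). -/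
open scoped BigOperators

noncomputable section

lemma summableG : ∀ m : ℕ, Summable (fun d : Fin m → ℤ => ∏ r, (((d r : ℤ) : ℝ) ^ 2)⁻¹) := by
  intro m
  induction m with
  | zero => exact Summable.of_finite
  | succ m ih =>
      have h1 : Summable (fun k : ℤ => (((k : ℤ) : ℝ) ^ 2)⁻¹) := by
        have := (Real.summable_one_div_int_pow (p := 2)).mpr one_lt_two
        simpa [one_div] using this
      have hprod := h1.mul_of_nonneg ih (fun k => by positivity)
        (fun d => Finset.prod_nonneg (fun r _ => by positivity))
      have := (Fin.consEquiv (fun _ : Fin (m + 1) => ℤ)).symm.summable_iff.2 hprod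
      refine this.congr ?_
      intro d
      simp [Fin.consEquiv, Fin.prod_univ_succ, Function.comp, Fin.tail, mul_comm]


/-- For every `n ≥ 2`, the series
`V_n = Σ_{λ_1 > … > λ_{n-1} > λ_n = 0} ∏_{r<s} (λ_r − λ_s)^{-2}` converges. -/
theorem statement4 (n : ℕ) (hn : 2 ≤ n) :
    Summable (fun l : DecSet n =>
      ∏ p ∈ pairsLt n, ((((l.1 p.1 - l.1 p.2 : ℤ) : ℝ)) ^ 2)⁻¹) := by
  -- consecutive-pair indices
  set i : Fin (n - 1) → Fin n := fun r => ⟨r, by omega⟩ with hi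
  set j : Fin (n - 1) → Fin n := fun r => ⟨r + 1, by omega⟩ with hj
  have hij : ∀ r, i r < j r := fun r => by simp [hi, hj, Fin.lt_def]
  -- difference map
  set e : DecSet n → (Fin (n - 1) → ℤ) := fun l r => l.1 (i r) - l.1 (j r) with he
  have einj : Function.Injective e := by
    intro l l' h
    have key : ∀ t : ℕ, ∀ k : Fin n, n - 1 - (k : ℕ) = t → l.1 k = l'.1 k := by
      intro t
      induction t with
      | zero =>
          intro k hk
          have hk' : (k : ℕ) = n - 1 := by have := k.isLt; omega
          rw [l.2.2 k hk', l'.2.2 k hk']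
      | succ t iht =>
          intro k hk
          have hklt : (k : ℕ) < n - 1 := by omega
          set k' : Fin n := ⟨(k : ℕ) + 1, by omega⟩ with hk'
          have hnext : l.1 k' = l'.1 k' := iht k' (by simp [hk']; omega)
          have hdiff := congrFun h ⟨(k : ℕ), hklt⟩
          have hik : i ⟨(k : ℕ), hklt⟩ = k := by ext; simp [hi]
          have hjk : j ⟨(k : ℕ), hklt⟩ = k' := by ext; simp [hj, hk']
          simp only [he, hik, hjk] at hdiff
          omega
    apply Subtype.ext
    funext k
    exact key (n - 1 - (k : ℕ)) k rfl
  -- majorant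
  have hmaj : Summable (fun l : DecSet n =>
      ∏ r : Fin (n - 1), ((((l.1 (i r) - l.1 (j r) : ℤ) : ℝ)) ^ 2)⁻¹) := by
    have := (summableG (n - 1)).comp_injective einj
    exact this.congr (fun l => by simp [he, Function.comp])
  -- comparison
  refine Summable.of_nonneg_of_le
    (fun l => Finset.prod_nonneg fun p _ => by positivity) (fun l => ?_) hmaj
  -- the consecutive pairs as a subset of pairsLt n
  set S : Finset (Fin n × Fin n) := Finset.univ.image (fun r => (i r, j r)) with hS
  have hiinj : Function.Injective (fun r : Fin (n-1) => (i r, j r)) := by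
    intro a b hab
    have : (i a : ℕ) = (i b : ℕ) := by
      simpa [hi] using congrArg (fun p => ((p.1 : Fin n) : ℕ)) hab
    exact Fin.ext (by simpa [hi] using this)
  have hSsub : S ⊆ pairsLt n := by
    intro p hp
    simp only [hS, Finset.mem_image, Finset.mem_univ, true_and] at hp
    obtain ⟨r, rfl⟩ := hp
    simp [pairsLt, hij r]
  have hSprod : ∏ p ∈ S, ((((l.1 p.1 - l.1 p.2 : ℤ) : ℝ)) ^ 2)⁻¹
      = ∏ r : Fin (n - 1), ((((l.1 (i r) - l.1 (j r) : ℤ) : ℝ)) ^ 2)⁻¹ := by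
    rw [hS, Finset.prod_image (fun a _ b _ hab => hiinj hab)]
  -- each factor over pairsLt is ≤ 1
  have hfac : ∀ p ∈ pairsLt n, ((((l.1 p.1 - l.1 p.2 : ℤ) : ℝ)) ^ 2)⁻¹ ≤ 1 := by
    intro p hp
    have hlt : p.1 < p.2 := by simpa [pairsLt] using hp
    have h1 : (1 : ℤ) ≤ l.1 p.1 - l.1 p.2 := by
      have := l.2.1 p.1 p.2 hlt; omega
    have : (1 : ℝ) ≤ (((l.1 p.1 - l.1 p.2 : ℤ) : ℝ)) ^ 2 := by
      have : (1 : ℝ) ≤ ((l.1 p.1 - l.1 p.2 : ℤ) : ℝ) := by exact_mod_cast h1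
      nlinarith
    exact inv_le_one_of_one_le₀ this
  calc ∏ p ∈ pairsLt n, ((((l.1 p.1 - l.1 p.2 : ℤ) : ℝ)) ^ 2)⁻¹
      = (∏ p ∈ pairsLt n \ S, ((((l.1 p.1 - l.1 p.2 : ℤ) : ℝ)) ^ 2)⁻¹)
        * ∏ p ∈ S, ((((l.1 p.1 - l.1 p.2 : ℤ) : ℝ)) ^ 2)⁻¹ :=
        (Finset.prod_sdiff hSsub).symm
    _ ≤ 1 * ∏ p ∈ S, ((((l.1 p.1 - l.1 p.2 : ℤ) : ℝ)) ^ 2)⁻¹ := by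
        apply mul_le_mul_of_nonneg_right
        · exact Finset.prod_le_one (fun p _ => by positivity)
            (fun p hp => hfac p (Finset.mem_sdiff.mp hp).1)
        · exact Finset.prod_nonneg fun p _ => by positivity
    _ = ∏ r : Fin (n - 1), ((((l.1 (i r) - l.1 (j r) : ℤ) : ℝ)) ^ 2)⁻¹ := by
        rw [one_mul, hSprod]
end
end

section
/- (Orbit structure for large N.) Let n ≥ 2 and let I ∈ ℤ^n with I_1 > I_2 > … > I_{n−1} > I_n = 0. Then for every integer N > 2·I_1, one has I ∈ J_{n,N}, the orbit Ω(I, N) of I under the translation action Φ_N has exactly N elements, and I is the lexicographically smallest element of Ω(I, N). -/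
open scoped BigOperators

noncomputable section

/-- `J_{n,N}`: strictly decreasing integer tuples with entries in `{0, …, N−1}`. -/
def JFinset (n N : ℕ) : Finset (Fin n → ℤ) :=
  (Fintype.piFinset fun _ : Fin n => Finset.Icc (0 : ℤ) ((N : ℤ) - 1)).filter
    (fun I => ∀ r s : Fin n, r < s → I s < I r)

/-- `J` is in the orbit of `I` under the translation action `Φ_N`:
`J ∈ J_{n,N}` and the multiset of entries of `J` is the multiset of residues mod `N`
of `I + (l, …, l)` for some `l ∈ ℤ`. -/
def inOrbit (n N : ℕ) (I J : Fin n → ℤ) : Prop :=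
  J ∈ JFinset n N ∧
    ∃ l : ℤ, Multiset.map J Finset.univ.val
      = Multiset.map (fun r : Fin n => (I r + l) % (N : ℤ)) Finset.univ.val

/-- Strict lexicographic order on tuples. -/
def LexLt {n : ℕ} (I J : Fin n → ℤ) : Prop :=
  ∃ r : Fin n, (∀ q : Fin n, q < r → I q = J q) ∧ I r < J r

/-- `I` is the lexicographically smallest element of its orbit. -/
def IsOrbitMin (n N : ℕ) (I : Fin n → ℤ) : Prop :=
  ∀ J : Fin n → ℤ, inOrbit n N I J → J = I ∨ LexLt I J

/-- Two strictly decreasing tuples with the same multiset of values are equal. -/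
lemma sortedEqAux {n : ℕ} (J K : Fin n → ℤ)
    (hJ : ∀ r s : Fin n, r < s → J s < J r)
    (hK : ∀ r s : Fin n, r < s → K s < K r)
    (h : Multiset.map J Finset.univ.val = Multiset.map K Finset.univ.val) : J = K := by
  have hJ' : (List.ofFn J).Pairwise (· > ·) :=
    List.pairwise_ofFn.2 fun i j hij => hJ i j hij
  have hK' : (List.ofFn K).Pairwise (· > ·) :=
    List.pairwise_ofFn.2 fun i j hij => hK i j hij
  rw [Fin.univ_val_map, Fin.univ_val_map] at h
  have hp : (List.ofFn J).Perm (List.ofFn K) := Multiset.coe_eq_coe.1 h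
  haveI : Std.Antisymm (α := ℤ) (· > ·) := ⟨fun a b h1 h2 => absurd h1 (not_lt.2 h2.le)⟩
  exact List.ofFn_injective (hp.eq_of_pairwise' hJ' hK')

/-- From a congruence with both sides in `[0, N)` deduce equality. -/
lemma modeqEqAux {N a b : ℤ} (h : a % N = b % N) (ha : 0 ≤ a) (ha' : a < N)
    (hb : 0 ≤ b) (hb' : b < N) : a = b := by
  rwa [Int.emod_eq_of_lt ha ha', Int.emod_eq_of_lt hb hb'] at h

/-- **Orbit structure for large `N`.** -/
theorem statement6 (n : ℕ) (hn : 2 ≤ n) (I : Fin n → ℤ)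
    (hdec : ∀ r s : Fin n, r < s → I s < I r)
    (hlast : ∀ r : Fin n, (r : ℕ) = n - 1 → I r = 0)
    (N : ℕ) (hN : 2 * I ⟨0, by omega⟩ < (N : ℤ)) :
    I ∈ JFinset n N ∧
    Set.ncard {J : Fin n → ℤ | inOrbit n N I J} = N ∧
    IsOrbitMin n N I := by
  set z0 : Fin n := ⟨0, by omega⟩ with hz0
  set zl : Fin n := ⟨n - 1, by omega⟩ with hzl
  have hIl : I zl = 0 := hlast zl rfl
  have hz0l : z0 < zl := by rw [Fin.lt_def]; simp [hz0, hzl]; omega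
  have hpos : ∀ r, 0 ≤ I r := by
    intro r
    by_cases h : (r : ℕ) = n - 1
    · rw [hlast r h]
    · have hr : r < zl := by rw [Fin.lt_def]; have := r.isLt; simp [hzl]; omega
      have := hdec r zl hr
      omega
  have hle : ∀ r, I r ≤ I z0 := by
    intro r
    by_cases h : r = z0
    · rw [h]
    · have hr : z0 < r := by
        rw [Fin.lt_def]
        rcases Nat.eq_zero_or_pos (r : ℕ) with h0 | h0
        · exact absurd (Fin.ext h0) h
        · simpa [hz0]
      exact (hdec z0 r hr).le
  have hA1 : 1 ≤ I z0 := by have := hdec z0 zl hz0l; omega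
  have hNpos : (0 : ℤ) < (N : ℤ) := by omega
  set res : ℤ → Fin n → ℤ := fun l r => (I r + l) % (N : ℤ) with hres
  have hres0 : ∀ l r, 0 ≤ res l r := fun l r => Int.emod_nonneg _ (by omega)
  have hresN : ∀ l r, res l r < N := fun l r => Int.emod_lt_of_pos _ hNpos
  have hIinj : Function.Injective I := by
    intro r s h
    by_contra hrs
    rcases lt_or_gt_of_ne hrs with h' | h'
    · exact absurd h (by have := hdec r s h'; omega)
    · exact absurd h (by have := hdec s r h'; omega)
  have hresinj : ∀ l, Function.Injective (res l) := by
    intro l r s h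
    apply hIinj
    have hd : (N : ℤ) ∣ I s - I r := by
      have hm : I r + l ≡ I s + l [ZMOD (N : ℤ)] := h
      exact (Int.ModEq.add_right_cancel (Int.ModEq.refl l) hm).dvd
    have h0 : I s - I r = 0 := by
      refine Int.eq_zero_of_abs_lt_dvd hd ?_
      rw [abs_lt]
      have h1 := hpos r; have h2 := hpos s
      have h3 := hle r; have h4 := hle s
      omega
    omega
  -- key injectivity of shifts
  have hkey : ∀ l l' : ℤ, 0 ≤ l → (l : ℤ) < N → 0 ≤ l' → (l' : ℤ) < N → l < l' →
      Multiset.map (res l) Finset.univ.val ≠ Multiset.map (res l') Finset.univ.val := by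
    intro l l' hl0 hlN hl'0 hl'N hlt h
    have hmem : res l' zl ∈ Multiset.map (res l) Finset.univ.val := by
      rw [h]
      exact Multiset.mem_map_of_mem _ (Finset.mem_univ_val _)
    obtain ⟨s, _, hs⟩ := Multiset.mem_map.1 hmem
    have hrzl : res l' zl = l' := by
      simp only [hres, hIl, zero_add]
      exact Int.emod_eq_of_lt hl'0 hl'N
    -- from hs : res l s = res l' zl = l', deduce I s = l' - l
    have hIs : I s = l' - l := by
      have hm : (I s + l) % (N : ℤ) = l' % (N : ℤ) := by
        rw [Int.emod_eq_of_lt hl'0 hl'N]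
        rw [hrzl] at hs; exact hs
      have hm2 : (I s) % (N : ℤ) = (l' - l) % (N : ℤ) := by
        have := (Int.ModEq.sub_right l (hm : I s + l ≡ l' [ZMOD (N : ℤ)]))
        have h' : I s ≡ l' - l [ZMOD (N : ℤ)] := by simpa using this
        exact h'
      refine modeqEqAux hm2 (hpos s) ?_ (by omega) (by omega)
      have := hle s; omega
    -- now look at the residue of the top entry
    have hmem2 : res l' z0 ∈ Multiset.map (res l) Finset.univ.val := by
      rw [h]
      exact Multiset.mem_map_of_mem _ (Finset.mem_univ_val _)
    obtain ⟨t, _, ht⟩ := Multiset.mem_map.1 hmem2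
    have hIt : I t = I z0 + (l' - l) := by
      have hm : (I t + l) % (N : ℤ) = (I z0 + l') % (N : ℤ) := ht
      have hm2 : (I t) % (N : ℤ) = (I z0 + (l' - l)) % (N : ℤ) := by
        have := (Int.ModEq.sub_right l (hm : I t + l ≡ I z0 + l' [ZMOD (N : ℤ)]))
        have h2 : I t ≡ I z0 + l' - l [ZMOD (N : ℤ)] := by simpa using this
        have h3 : I t ≡ I z0 + (l' - l) [ZMOD (N : ℤ)] := by simpa [add_sub_assoc] using h2
        exact h3
      have hsle := hle s
      refine modeqEqAux hm2 (hpos t) ?_ (by omega) (by omega)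
      have := hle t; omega
    have := hle t
    omega
  -- the sorted residue tuples
  set T : ℤ → Finset ℤ := fun l => Finset.image (res l) Finset.univ with hT
  have hTcard : ∀ l, (T l).card = n := by
    intro l
    rw [hT]
    rw [Finset.card_image_of_injective _ (hresinj l), Finset.card_univ, Fintype.card_fin]
  set f : ℤ → Fin n → ℤ := fun l r => ((T l).orderIsoOfFin (hTcard l) r.rev : ℤ) with hf
  have hfdec : ∀ l (r s : Fin n), r < s → f l s < f l r := by
    intro l r s hrs
    have : s.rev < r.rev := Fin.rev_lt_rev.2 hrs
    have h2 := ((T l).orderIsoOfFin (hTcard l)).strictMono this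
    exact_mod_cast h2
  have hfinj : ∀ l, Function.Injective (f l) := by
    intro l r s h
    by_contra hrs
    rcases lt_or_gt_of_ne hrs with h' | h'
    · exact absurd h (by have := hfdec l r s h'; omega)
    · exact absurd h (by have := hfdec l s r h'; omega)
  have hfmem : ∀ l r, f l r ∈ T l := fun l r => ((T l).orderIsoOfFin (hTcard l) r.rev).2
  have hfsurj : ∀ l x, x ∈ T l → ∃ r, f l r = x := by
    intro l x hx
    refine ⟨(((T l).orderIsoOfFin (hTcard l)).symm ⟨x, hx⟩).rev, ?_⟩
    show (((T l).orderIsoOfFin (hTcard l)) ((((T l).orderIsoOfFin (hTcard l)).symm ⟨x, hx⟩).rev.rev) : ℤ) = x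
    rw [Fin.rev_rev, OrderIso.apply_symm_apply]
  have hfmulti : ∀ l, Multiset.map (f l) Finset.univ.val
      = Multiset.map (res l) Finset.univ.val := by
    intro l
    have h1 : (Multiset.map (f l) Finset.univ.val).Nodup :=
      Finset.univ.nodup.map (hfinj l)
    have h2 : (Multiset.map (res l) Finset.univ.val).Nodup :=
      Finset.univ.nodup.map (hresinj l)
    rw [Multiset.Nodup.ext h1 h2]
    intro x
    simp only [Multiset.mem_map, Finset.mem_val, Finset.mem_univ, true_and]
    constructor
    · rintro ⟨r, rfl⟩
      have := hfmem l r
      rw [hT] at this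
      obtain ⟨s, _, hs⟩ := Finset.mem_image.1 this
      exact ⟨s, hs⟩
    · rintro ⟨r, rfl⟩
      have hx : res l r ∈ T l := by
        rw [hT]; exact Finset.mem_image_of_mem _ (Finset.mem_univ r)
      exact hfsurj l _ hx
  have hfbound : ∀ l r, 0 ≤ f l r ∧ f l r < N := by
    intro l r
    have := hfmem l r
    rw [hT] at this
    obtain ⟨s, _, hs⟩ := Finset.mem_image.1 this
    rw [← hs]
    exact ⟨hres0 l s, hresN l s⟩
  have hfJ : ∀ l, f l ∈ JFinset n N := by
    intro l
    rw [JFinset, Finset.mem_filter]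
    refine ⟨?_, fun r s hrs => hfdec l r s hrs⟩
    rw [Fintype.mem_piFinset]
    intro r
    rw [Finset.mem_Icc]
    have := hfbound l r
    omega
  -- residues only depend on the shift modulo N
  have hresmod : ∀ l r, res (l % (N : ℤ)) r = res l r := by
    intro l r
    simp only [hres]
    rw [Int.add_emod, Int.emod_emod_of_dvd _ dvd_rfl, ← Int.add_emod]
  -- the orbit set is the image of [0, N)
  have hSeq : {J : Fin n → ℤ | inOrbit n N I J} = f '' Set.Ico (0 : ℤ) (N : ℤ) := by
    ext J
    constructor
    · rintro ⟨hJmem, l, hml⟩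
      refine ⟨l % (N : ℤ), ⟨Int.emod_nonneg _ (by omega), Int.emod_lt_of_pos _ hNpos⟩, ?_⟩
      have hJdec : ∀ r s : Fin n, r < s → J s < J r := (Finset.mem_filter.1 hJmem).2
      refine sortedEqAux _ _ (hfdec _) hJdec ?_
      rw [hfmulti, hml]
      congr 1
      funext r
      exact hresmod l r
    · rintro ⟨l, ⟨hl0, hlN⟩, rfl⟩
      exact ⟨hfJ l, l, hfmulti l⟩
  have hinjOn : Set.InjOn f (Set.Ico (0 : ℤ) (N : ℤ)) := by
    rintro l ⟨hl0, hlN⟩ l' ⟨hl'0, hl'N⟩ heq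
    by_contra hne
    have hm : Multiset.map (res l) Finset.univ.val
        = Multiset.map (res l') Finset.univ.val := by
      rw [← hfmulti, ← hfmulti, heq]
    rcases lt_or_gt_of_ne hne with h' | h'
    · exact hkey l l' hl0 hlN hl'0 hl'N h' hm
    · exact hkey l' l hl'0 hl'N hl0 hlN h' hm.symm
  refine ⟨?_, ?_, ?_⟩
  · -- I ∈ JFinset
    rw [JFinset, Finset.mem_filter]
    refine ⟨?_, hdec⟩
    rw [Fintype.mem_piFinset]
    intro r
    rw [Finset.mem_Icc]
    have := hpos r; have := hle r
    omega
  · -- cardinality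
    rw [hSeq, Set.ncard_image_of_injOn hinjOn, ← Finset.coe_Ico, Set.ncard_coe_finset,
      Int.card_Ico]
    omega
  · -- orbit minimality
    intro J ⟨hJmem, l, hml⟩
    have hJdec : ∀ r s : Fin n, r < s → J s < J r := (Finset.mem_filter.1 hJmem).2
    set l' : ℤ := l % (N : ℤ) with hl'
    have hl'0 : 0 ≤ l' := Int.emod_nonneg _ (by omega)
    have hl'N : l' < N := Int.emod_lt_of_pos _ hNpos
    have hml' : Multiset.map J Finset.univ.val
        = Multiset.map (res l') Finset.univ.val := by
      rw [hml]
      congr 1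
      funext r
      exact (hresmod l r).symm
    by_cases h0 : l' = 0
    · left
      refine sortedEqAux J I hJdec hdec ?_
      rw [hml']
      congr 1
      funext r
      simp only [hres, h0, add_zero]
      exact Int.emod_eq_of_lt (hpos r) (by have := hle r; omega)
    · right
      have hl'pos : 0 < l' := lt_of_le_of_ne hl'0 (Ne.symm h0)
      -- find an entry of J bigger than I z0
      have hbig : ∃ s : Fin n, I z0 < J s := by
        by_cases hc : I z0 + l' < N
        · have hx : res l' z0 = I z0 + l' := Int.emod_eq_of_lt (by omega) hc
          have hmem : res l' z0 ∈ Multiset.map J Finset.univ.val := by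
            rw [hml']
            exact Multiset.mem_map_of_mem _ (Finset.mem_univ_val _)
          obtain ⟨s, _, hs⟩ := Multiset.mem_map.1 hmem
          exact ⟨s, by omega⟩
        · have hx : res l' zl = l' := by
            simp only [hres, hIl, zero_add]
            exact Int.emod_eq_of_lt hl'0 hl'N
          have hmem : res l' zl ∈ Multiset.map J Finset.univ.val := by
            rw [hml']
            exact Multiset.mem_map_of_mem _ (Finset.mem_univ_val _)
          obtain ⟨s, _, hs⟩ := Multiset.mem_map.1 hmem
          exact ⟨s, by omega⟩
      obtain ⟨s, hs⟩ := hbig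
      have hJ0 : I z0 < J z0 := by
        by_cases hsz : s = z0
        · rw [hsz] at hs; exact hs
        · have : z0 < s := by
            rw [Fin.lt_def]
            rcases Nat.eq_zero_or_pos (s : ℕ) with h0' | h0'
            · exact absurd (Fin.ext h0') hsz
            · simpa [hz0]
          have := hJdec z0 s this
          omega
      exact ⟨z0, fun q hq => absurd hq (by rw [Fin.lt_def]; simp [hz0]), hJ0⟩
end
end

section
/- (Uniform spacing of the largest entry of orbit minima.) Let n ≥ 1 and N ≥ n, and let I ∈ J_{n,N} be the lexicographically smallest element of its orbit Ω(I, N) under the translation action Φ_N. Then I_1/N ≤ 1 − 1/n, i.e. n·I_1 ≤ (n−1)·N. -/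
open scoped BigOperators

noncomputable section

/-- **Uniform spacing of the largest entry of orbit minima.** -/
theorem statement8 (n N : ℕ) (hn : 1 ≤ n) (hnN : n ≤ N)
    (I : Fin n → ℤ) (hI : I ∈ JFinset n N) (hmin : IsOrbitMin n N I) :
    (n : ℤ) * I ⟨0, by omega⟩ ≤ ((n : ℤ) - 1) * N := by
  have hn0 : 0 < n := hn
  set i0 : Fin n := ⟨0, hn0⟩ with hi0
  have hIb : ∀ r : Fin n, 0 ≤ I r ∧ I r ≤ (N : ℤ) - 1 := by
    intro r
    have h1 := (Finset.mem_filter.mp hI).1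
    rw [Fintype.mem_piFinset] at h1
    simpa [Finset.mem_Icc] using h1 r
  have hIdec : ∀ r s : Fin n, r < s → I s < I r := (Finset.mem_filter.mp hI).2
  have hNpos : (0 : ℤ) < N := by exact_mod_cast lt_of_lt_of_le hn0 hnN
  -- the cyclic successor map
  have hρlt : ∀ k : Fin n, ((k : ℕ) + 1) % n < n := fun k => Nat.mod_lt _ hn0
  set ρ : Fin n → Fin n := fun k => ⟨((k : ℕ) + 1) % n, hρlt k⟩ with hρdef
  have hmodval : ∀ (m : ℕ), m ≤ n → ∀ (a : Fin n),
      ((a : ℕ) + m) % n = if (a : ℕ) + m < n then (a : ℕ) + m else (a : ℕ) + m - n := by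
    intro m hm a
    split_ifs with h
    · exact Nat.mod_eq_of_lt h
    · have ha := a.isLt
      rw [Nat.mod_eq_sub_mod (by omega)]
      exact Nat.mod_eq_of_lt (by omega)
  have hρbij : Function.Bijective ρ := by
    apply Finite.injective_iff_bijective.mp
    intro a b hab
    have h1 : ((a : ℕ) + 1) % n = ((b : ℕ) + 1) % n := congrArg Fin.val hab
    rw [hmodval 1 hn a, hmodval 1 hn b] at h1
    have ha := a.isLt; have hb := b.isLt
    apply Fin.ext
    split_ifs at h1 <;> omega
  -- M s : largest entry of the orbit element obtained by shifting by -I s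
  set M : Fin n → ℤ :=
    fun s => (if (s : ℕ) + 1 < n then (N : ℤ) else 0) + I (ρ s) - I s with hMdef
  -- Key step: I i0 ≤ M s for every s
  have key : ∀ s : Fin n, I i0 ≤ M s := by
    intro s
    set f : Fin n → ℤ := fun r => (I r - I s) % (N : ℤ) with hf
    have hfeq : ∀ r : Fin n,
        f r = if (s : ℕ) < (r : ℕ) then (N : ℤ) + I r - I s else I r - I s := by
      intro r
      split_ifs with h
      · have h1 : I r < I s := hIdec s r (Fin.lt_def.mpr h)
        have hr1 := (hIb r).1; have hs2 := (hIb s).2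
        have h2 : (I r - I s) % (N : ℤ) = (I r - I s + N) % N := by
          have := Int.add_mul_emod_self_left (a := I r - I s) (b := (N : ℤ)) (c := 1)
          simp only [mul_one] at this
          exact this.symm
        rw [hf]
        simp only []
        rw [h2, Int.emod_eq_of_lt (by omega) (by omega)]
        ring
      · have h1 : I s ≤ I r := by
          rcases eq_or_lt_of_le (Fin.le_def.mpr (by omega : (r : ℕ) ≤ (s : ℕ))) with he | hl
          · rw [he]
          · exact le_of_lt (hIdec r s hl)
        have hr2 := (hIb r).2; have hs1 := (hIb s).1
        rw [hf]
        simp only []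
        rw [Int.emod_eq_of_lt (by omega) (by omega)]
    set σ : Fin n → Fin n :=
      fun k => ⟨((k : ℕ) + ((s : ℕ) + 1)) % n, Nat.mod_lt _ hn0⟩ with hσdef
    have hσbij : Function.Bijective σ := by
      apply Finite.injective_iff_bijective.mp
      intro a b hab
      have h1 : ((a : ℕ) + ((s : ℕ) + 1)) % n = ((b : ℕ) + ((s : ℕ) + 1)) % n :=
        congrArg Fin.val hab
      rw [hmodval _ (by omega) a, hmodval _ (by omega) b] at h1
      have ha := a.isLt; have hb := b.isLt; have hs := s.isLt
      apply Fin.ext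
      split_ifs at h1 <;> omega
    set J : Fin n → ℤ := fun k => f (σ k) with hJdef
    -- explicit values of J
    have hJ1 : ∀ k : Fin n, ∀ h : (k : ℕ) + ((s : ℕ) + 1) < n,
        J k = (N : ℤ) + I ⟨(k : ℕ) + ((s : ℕ) + 1), h⟩ - I s := by
      intro k h
      have hσk : σ k = ⟨(k : ℕ) + ((s : ℕ) + 1), h⟩ := by
        apply Fin.ext
        simp only [hσdef]
        rw [hmodval _ (by have := s.isLt; omega) k, if_pos h]
      rw [hJdef]
      simp only []
      rw [hσk, hfeq]
      rw [if_pos (by simp; omega)]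
    have hJ2 : ∀ k : Fin n, n ≤ (k : ℕ) + ((s : ℕ) + 1) →
        J k = I ⟨(k : ℕ) + ((s : ℕ) + 1) - n, by have := k.isLt; have := s.isLt; omega⟩
          - I s := by
      intro k h
      have hσk : σ k = ⟨(k : ℕ) + ((s : ℕ) + 1) - n,
          by have := k.isLt; have := s.isLt; omega⟩ := by
        apply Fin.ext
        simp only [hσdef]
        rw [hmodval _ (by have := s.isLt; omega) k, if_neg (by omega)]
      rw [hJdef]
      simp only []
      rw [hσk, hfeq]
      rw [if_neg (by simp; have := k.isLt; omega)]
    -- J is in JFinset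
    have hJmem : J ∈ JFinset n N := by
      rw [JFinset, Finset.mem_filter]
      constructor
      · rw [Fintype.mem_piFinset]
        intro r
        rw [Finset.mem_Icc]
        constructor
        · have h3 : J r = (I (σ r) - I s) % (N : ℤ) := rfl
          rw [h3]
          exact Int.emod_nonneg _ (by omega)
        · have h3 : J r = (I (σ r) - I s) % (N : ℤ) := rfl
          have := Int.emod_lt_of_pos (I (σ r) - I s) hNpos
          omega
      · intro r t hrt
        have hrt' : (r : ℕ) < (t : ℕ) := Fin.lt_def.mp hrt
        have hr := r.isLt; have ht := t.isLt; have hs := s.isLt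
        by_cases h1 : (r : ℕ) + ((s : ℕ) + 1) < n
        · by_cases h2 : (t : ℕ) + ((s : ℕ) + 1) < n
          · rw [hJ1 r h1, hJ1 t h2]
            have := hIdec ⟨(r : ℕ) + ((s : ℕ) + 1), h1⟩ ⟨(t : ℕ) + ((s : ℕ) + 1), h2⟩
              (Fin.lt_def.mpr (by simp; omega))
            omega
          · rw [hJ1 r h1, hJ2 t (by omega)]
            have hb1 := (hIb ⟨(r : ℕ) + ((s : ℕ) + 1), h1⟩).1
            have hb2 := (hIb ⟨(t : ℕ) + ((s : ℕ) + 1) - n, by omega⟩).2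
            omega
        · rw [hJ2 r (by omega), hJ2 t (by omega)]
          have := hIdec ⟨(r : ℕ) + ((s : ℕ) + 1) - n, by omega⟩
            ⟨(t : ℕ) + ((s : ℕ) + 1) - n, by omega⟩ (Fin.lt_def.mpr (by simp; omega))
          omega
    -- J is in the orbit of I
    have horb : inOrbit n N I J := by
      refine ⟨hJmem, -(I s), ?_⟩
      have hfun : (fun r : Fin n => (I r + -(I s)) % (N : ℤ)) = f := by
        funext r; rw [hf]; ring_nf
      rw [hfun]
      have e : Fin n ≃ Fin n := Equiv.ofBijective σ hσbij
      have huniv : Finset.univ.val.map σ = Finset.univ.val := by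
        have h1 : Finset.univ.map (Equiv.ofBijective σ hσbij).toEmbedding
            = Finset.univ := Finset.map_univ_equiv _
        have h2 := congrArg Finset.val h1
        rw [Finset.map_val] at h2
        exact h2
      calc Multiset.map J Finset.univ.val
          = Multiset.map f (Finset.univ.val.map σ) := by
            rw [Multiset.map_map]; rfl
        _ = Multiset.map f Finset.univ.val := by rw [huniv]
    -- J i0 = M s
    have hJ0 : J i0 = M s := by
      have hMs : M s = (if (s : ℕ) + 1 < n then (N : ℤ) else 0) + I (ρ s) - I s := rfl
      rw [hMs]
      by_cases h : (s : ℕ) + 1 < n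
      · rw [hJ1 i0 (by simp only [hi0, Fin.val_mk]; omega), if_pos h]
        have hρs : ρ s = ⟨(0 : ℕ) + ((s : ℕ) + 1), by simpa using h⟩ := by
          apply Fin.ext
          simp only [hρdef]
          rw [hmodval 1 hn s, if_pos (by omega)]
          simp
        rw [hρs]
      · have hs := s.isLt
        rw [hJ2 i0 (by simp only [hi0, Fin.val_mk]; omega), if_neg h]
        have hρs : ρ s = ⟨(0 : ℕ) + ((s : ℕ) + 1) - n, by omega⟩ := by
          apply Fin.ext
          simp only [hρdef]
          rw [hmodval 1 hn s, if_neg (by omega)]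
          omega
        rw [hρs]
        ring
    -- lex minimality gives I i0 ≤ J i0
    have hle : I i0 ≤ J i0 := by
      rcases hmin J horb with h | ⟨r, hq, hr⟩
      · rw [h]
      · rcases eq_or_lt_of_le (Fin.le_def.mpr (show (i0 : ℕ) ≤ (r : ℕ) from Nat.zero_le _)) with he | hl
        · rw [← he] at hr; exact le_of_lt hr
        · exact le_of_eq (hq i0 hl)
    rw [← hJ0]; exact hle
  -- sum over all s
  have hsum1 : (∑ s : Fin n, I i0) ≤ ∑ s : Fin n, M s :=
    Finset.sum_le_sum fun s _ => key s
  have hconst : (∑ _s : Fin n, I i0) = (n : ℤ) * I i0 := by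
    rw [Finset.sum_const, Finset.card_univ, Fintype.card_fin, nsmul_eq_mul]
  have hrot : (∑ s : Fin n, I (ρ s)) = ∑ s : Fin n, I s := hρbij.sum_comp I
  have hc : (∑ s : Fin n, (if (s : ℕ) + 1 < n then (N : ℤ) else 0))
      = (n : ℤ) * N - N := by
    have h1 : ∀ s : Fin n, (if (s : ℕ) + 1 < n then (N : ℤ) else 0)
        = (N : ℤ) - (if s = (⟨n - 1, by omega⟩ : Fin n) then (N : ℤ) else 0) := by
      intro s
      by_cases h : (s : ℕ) + 1 < n
      · rw [if_pos h, if_neg (by intro he; rw [he] at h; simp at h; omega)]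
        ring
      · have hs := s.isLt
        rw [if_neg h, if_pos (Fin.ext (by simp; omega))]
        ring
    rw [Finset.sum_congr rfl fun s _ => h1 s, Finset.sum_sub_distrib,
      Finset.sum_const, Finset.card_univ, Fintype.card_fin, nsmul_eq_mul,
      Finset.sum_ite_eq' Finset.univ]
    simp
  have hMsum : (∑ s : Fin n, M s) = ((n : ℤ) - 1) * N := by
    rw [hMdef]
    simp only []
    rw [Finset.sum_sub_distrib, Finset.sum_add_distrib, hrot, hc]
    ring
  rw [hconst, hMsum] at hsum1
  exact hsum1
end
end

section
/- (Uniform control of F on orbit minima.) Let n ≥ 3 and set c_n = sin(π(1 − 1/n))/(1 − 1/n). For every N ≥ n, every λ, μ, ν ∈ ℤ^n, and every I ∈ J_{n,N} with I_n = 0 which is the lexicographically smallest element of its orbit Ω(I, N) under Φ_N, one has N^{−(n−1)−(n−1)(n−2)/2} · |F(I, λ, μ, ν, N)| ≤ n^{3n} · (2 c_n)^{−n(n−1)/2} / Δ(I). -/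
open scoped BigOperators

noncomputable section

/-- Vandermonde determinant `Δ(x) = ∏_{r<s} (x_r − x_s)` of a complex tuple. -/
def vandC {n : ℕ} (x : Fin n → ℂ) : ℂ := ∏ p ∈ pairsLt n, (x p.1 - x p.2)

/-- The function `F(I, λ, μ, ν, N)` (with 0-based indexing, so `λ_s + s − 1`
becomes `lam s + s`). -/
def Fdet (n N : ℕ) (I : Fin n → ℝ) (lam mu nu : Fin n → ℤ) : ℂ :=
  (Matrix.of fun r s : Fin n =>
      Complex.exp (twoPiI * (I r : ℂ) * ((lam s : ℂ) + ((s : ℕ) : ℂ)) / (N : ℂ))).det *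
  (Matrix.of fun r s : Fin n =>
      Complex.exp (twoPiI * (I r : ℂ) * ((mu s : ℂ) + ((s : ℕ) : ℂ)) / (N : ℂ))).det *
  (Matrix.of fun r s : Fin n =>
      Complex.exp (-(twoPiI * (I r : ℂ) * ((nu s : ℂ) + ((s : ℕ) : ℂ)) / (N : ℂ)))).det /
  vandC (fun r => Complex.exp (twoPiI * (I r : ℂ) / (N : ℂ)))

/-! ### Auxiliary lemmas -/

lemma sin_concave_bound (x a : ℝ) (hx : 0 < x) (hxa : x ≤ a) (ha : a < 1) :
    Real.sin (Real.pi * a) / a * x ≤ Real.sin (Real.pi * x) := by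
  have ha0 : 0 < a := lt_of_lt_of_le hx hxa
  have hpi := Real.pi_pos
  have hdiv : x/a ≤ 1 := by rw [div_le_one ha0]; exact hxa
  have hcc := strictConcaveOn_sin_Icc.concaveOn
  have h := hcc.2 (x := (0:ℝ)) (y := Real.pi * a) ⟨le_rfl, hpi.le⟩
    ⟨by positivity, by nlinarith⟩ (show (0:ℝ) ≤ 1 - x/a by linarith)
    (show (0:ℝ) ≤ x/a by positivity) (by ring)
  simp only [smul_eq_mul, mul_zero, Real.sin_zero, zero_add] at h
  have hxx : (x/a) * (Real.pi * a) = Real.pi * x := by field_simp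
  rw [hxx] at h
  calc Real.sin (Real.pi * a) / a * x = x/a * Real.sin (Real.pi * a) := by ring
    _ ≤ _ := h

lemma norm_exp_I_eq_one (x : ℝ) : ‖Complex.exp ((x:ℂ) * Complex.I)‖ = 1 := by
  rw [Complex.norm_exp_ofReal_mul_I]

lemma exp_sub_exp_eq (a b : ℝ) :
    Complex.exp ((a:ℂ)*Complex.I) - Complex.exp ((b:ℂ)*Complex.I)
      = Complex.exp ((((a+b)/2 : ℝ):ℂ)*Complex.I) *
        (2 * Complex.sin (((a-b)/2 : ℝ):ℂ) * Complex.I) := by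
  have key : ∀ t : ℂ, Complex.exp (t * Complex.I) - Complex.exp (-t * Complex.I)
      = 2 * Complex.sin t * Complex.I := by
    intro t
    rw [Complex.sin]
    linear_combination (Complex.exp (t * Complex.I) - Complex.exp (-t * Complex.I)) * Complex.I_sq
  have h2 := key (((a-b)/2 : ℝ):ℂ)
  rw [← h2, mul_sub, ← Complex.exp_add, ← Complex.exp_add]
  congr 2 <;> push_cast <;> ring

lemma norm_exp_sub_exp (a b : ℝ) :
    ‖Complex.exp ((a:ℂ)*Complex.I) - Complex.exp ((b:ℂ)*Complex.I)‖
      = 2 * |Real.sin ((a-b)/2)| := by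
  rw [exp_sub_exp_eq, norm_mul, norm_exp_I_eq_one, one_mul, norm_mul, norm_mul,
    ← Complex.ofReal_sin]
  simp only [Complex.norm_I, Complex.norm_two, mul_one]
  rw [Complex.norm_real, Real.norm_eq_abs]

lemma norm_det_le (n : ℕ) (A : Matrix (Fin n) (Fin n) ℂ)
    (h : ∀ r s, ‖A r s‖ ≤ 1) : ‖A.det‖ ≤ (n:ℝ) ^ n := by
  rw [Matrix.det_apply]
  refine le_trans (norm_sum_le _ _) ?_
  have hterm : ∀ σ ∈ (Finset.univ : Finset (Equiv.Perm (Fin n))),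
      ‖Equiv.Perm.sign σ • ∏ i, A (σ i) i‖ ≤ 1 := by
    intro σ _
    have h0 : ‖Equiv.Perm.sign σ • ∏ i, A (σ i) i‖ = ‖∏ i, A (σ i) i‖ := by
      rcases Int.units_eq_one_or (Equiv.Perm.sign σ) with hs | hs <;> simp [hs]
    rw [h0, norm_prod]
    exact Finset.prod_le_one (fun i _ => norm_nonneg _) (fun i _ => h _ _)
  refine le_trans (Finset.sum_le_card_nsmul _ _ 1 hterm) ?_
  simp only [Finset.card_univ, Fintype.card_perm, Fintype.card_fin, nsmul_eq_mul, mul_one]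
  exact_mod_cast (Nat.cast_le (α := ℝ)).2 (Nat.factorial_le_pow n)

lemma card_pairsLt (m : ℕ) : (pairsLt m).card = m * (m-1) / 2 := by
  rw [pairsLt, Finset.card_eq_sum_card_fiberwise (f := fun p => p.2) (t := Finset.univ)
    (fun x _ => Finset.mem_univ _)]
  have fib : ∀ s : Fin m, Finset.filter (fun p => p.2 = s)
      (Finset.filter (fun p : Fin m × Fin m => p.1 < p.2) Finset.univ)
      = (Finset.Iio s) ×ˢ {s} := by
    intro s; ext p
    simp only [Finset.mem_filter, Finset.mem_univ, true_and, Finset.mem_product,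
      Finset.mem_Iio, Finset.mem_singleton]
    constructor
    · rintro ⟨h1, h2⟩; exact ⟨h2 ▸ h1, h2⟩
    · rintro ⟨h1, h2⟩; exact ⟨h2 ▸ h1, h2⟩
  simp only [fib, Finset.card_product, Finset.card_singleton, mul_one, Fin.card_Iio]
  rw [Fin.sum_univ_eq_sum_range (fun i => i) m]
  have := Finset.sum_range_id_mul_two m
  omega

lemma exps_eq (n : ℕ) (hn : 3 ≤ n) :
    (n - 1) + (n - 1) * (n - 2) / 2 = n * (n-1) / 2 := by
  obtain ⟨m, rfl⟩ : ∃ m, n = m + 3 := ⟨n - 3, by omega⟩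
  simp only [show m+3-1 = m+2 from rfl, show m+3-2 = m+1 from rfl]
  have e3 : (m+3) * (m+2) = (m+2)*(m+1) + 2*(m+2) := by ring
  have h2 : 2 ∣ (m+2) * (m+1) := by
    have := (Nat.even_mul_succ_self (m+1)).two_dvd
    rwa [mul_comm] at this
  have h4 : 2 ∣ (m+3) * (m+2) := by omega
  omega

lemma top_bound (n N : ℕ) (hn : 3 ≤ n) (hnN : n ≤ N)
    (I : Fin n → ℤ) (hI : I ∈ JFinset n N)
    (hlast : ∀ r : Fin n, (r : ℕ) = n - 1 → I r = 0)
    (hmin : IsOrbitMin n N I) :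
    (n : ℤ) * I ⟨0, by omega⟩ ≤ ((n : ℤ) - 1) * N := by
  have npos : 0 < n := by omega
  rw [JFinset, Finset.mem_filter, Fintype.mem_piFinset] at hI
  obtain ⟨hmem, hdec⟩ := hI
  have hmem' : ∀ r, 0 ≤ I r ∧ I r ≤ (N:ℤ) - 1 := fun r => Finset.mem_Icc.mp (hmem r)
  have hmono : ∀ r s : Fin n, r ≤ s → I s ≤ I r := by
    intro r s h
    rcases eq_or_lt_of_le h with h' | h'
    · rw [h']
    · exact (hdec r s h').le
  have hNZ : (3:ℤ) ≤ (N:ℤ) := by exact_mod_cast le_trans hn hnN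
  have hmod : ∀ x : ℕ, x < 2*n → x % n = if x < n then x else x - n := by
    intro x hx; split
    · exact Nat.mod_eq_of_lt ‹_›
    · rw [Nat.mod_eq_sub_mod (by omega)]; exact Nat.mod_eq_of_lt (by omega)
  haveI : NeZero n := ⟨by omega⟩
  have gapstep : ∀ (k : ℕ) (hk : k < n - 1),
      I ⟨k, by omega⟩ - I ⟨k+1, by omega⟩ ≤ (N:ℤ) - I ⟨0, npos⟩ := by
    intro k hk
    set kk : Fin n := ⟨k, by omega⟩ with hkk
    set c : Fin n := ⟨k+1, by omega⟩ with hc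
    set e : Equiv.Perm (Fin n) := Equiv.addRight c with he
    have hev : ∀ r : Fin n, ((e r : Fin n) : ℕ) = (r.val + (k+1)) % n := by
      intro r
      simp only [he, Equiv.coe_addRight, Fin.val_add, hc]
    set f : Fin n → ℤ := fun j => I j - I kk + (if kk < j then (N:ℤ) else 0) with hfdef
    set J : Fin n → ℤ := fun r => f (e r) with hJdef
    have hf : ∀ j, f j = (I j + (- I kk)) % (N:ℤ) := by
      intro j
      by_cases hj : kk < j
      · have h1 : I j < I kk := hdec kk j hj
        have h2 := (hmem' j).1
        have h3 := (hmem' kk).2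
        have h4 : I j + -I kk = (I j - I kk + N) + N * (-1) := by ring
        rw [h4, Int.add_mul_emod_self_left, Int.emod_eq_of_lt (by omega) (by omega)]
        simp only [hfdef, if_pos hj]
      · have h1 : I kk ≤ I j := hmono _ _ (le_of_not_gt hj)
        have h2 := (hmem' kk).1
        have h3 := (hmem' j).2
        rw [show I j + -I kk = I j - I kk by ring,
          Int.emod_eq_of_lt (by omega) (by omega)]
        simp only [hfdef, if_neg hj, add_zero]
    have hklt : ∀ r : Fin n, (kk < e r ↔ r.val + (k+1) < n) := by
      intro r
      have hv := hev r
      rw [Fin.lt_def, hv, hmod _ (by omega)]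
      constructor
      · intro h
        by_contra hcon
        push_neg at hcon
        rw [if_neg (by omega)] at h
        have := r.isLt
        simp only [hkk] at h
        omega
      · intro h
        rw [if_pos h]
        simp only [hkk]
        omega
    have hevhigh : ∀ r : Fin n, r.val + (k+1) < n → ((e r : Fin n) : ℕ) = r.val + (k+1) := by
      intro r h; rw [hev r, Nat.mod_eq_of_lt h]
    have hevlow : ∀ r : Fin n, ¬ (r.val + (k+1) < n) → ((e r : Fin n) : ℕ) = r.val + (k+1) - n := by
      intro r h; rw [hev r, hmod _ (by have := r.isLt; omega), if_neg h]
    have hJmem : J ∈ JFinset n N := by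
      rw [JFinset, Finset.mem_filter, Fintype.mem_piFinset]
      constructor
      · intro r
        rw [Finset.mem_Icc]
        by_cases hr : kk < e r
        · have h1 : I (e r) < I kk := hdec _ _ hr
          have h2 := (hmem' (e r)).1
          have h3 := (hmem' kk).2
          simp only [hJdef, hfdef, if_pos hr]
          omega
        · have h1 : I kk ≤ I (e r) := hmono _ _ (le_of_not_gt hr)
          have h2 := (hmem' (e r)).2
          have h3 := (hmem' kk).1
          simp only [hJdef, hfdef, if_neg hr]
          omega
      · intro r s hrs
        rw [Fin.lt_def] at hrs
        by_cases h1 : r.val + (k+1) < n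
        · by_cases h2 : s.val + (k+1) < n
          · have her := hevhigh r h1
            have hes := hevhigh s h2
            have hlt : e r < e s := by rw [Fin.lt_def, her, hes]; omega
            have hkr : kk < e r := (hklt r).mpr h1
            have hks : kk < e s := (hklt s).mpr h2
            have hd := hdec (e r) (e s) hlt
            simp only [hJdef, hfdef, if_pos hkr, if_pos hks]
            omega
          · have hkr : kk < e r := (hklt r).mpr h1
            have hks : ¬ kk < e s := fun h => h2 ((hklt s).mp h)
            have h3 := (hmem' (e r)).1
            have h4 := (hmem' (e s)).2
            simp only [hJdef, hfdef, if_pos hkr, if_neg hks]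
            omega
        · have h2 : ¬ (s.val + (k+1) < n) := by omega
          have her := hevlow r h1
          have hes := hevlow s h2
          have hlt : e r < e s := by rw [Fin.lt_def, her, hes]; omega
          have hkr : ¬ kk < e r := fun h => h1 ((hklt r).mp h)
          have hks : ¬ kk < e s := fun h => h2 ((hklt s).mp h)
          have hd := hdec (e r) (e s) hlt
          simp only [hJdef, hfdef, if_neg hkr, if_neg hks]
          omega
    have horb : inOrbit n N I J := by
      refine ⟨hJmem, -I kk, ?_⟩
      have h1 : Multiset.map J Finset.univ.val
          = Multiset.map f (Multiset.map (⇑e) Finset.univ.val) := by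
        rw [Multiset.map_map]; rfl
      have huniv : Multiset.map (⇑e) Finset.univ.val = Finset.univ.val := by
        have h2 := Finset.map_univ_equiv e
        calc Multiset.map (⇑e) Finset.univ.val
            = (Finset.map e.toEmbedding Finset.univ).val := rfl
          _ = Finset.univ.val := by rw [h2]
      rw [h1, huniv]
      exact Multiset.map_congr rfl (fun j _ => hf j)
    have hJ0 : I ⟨0, npos⟩ ≤ J ⟨0, npos⟩ := by
      rcases hmin J horb with h | ⟨r, hq, hr⟩
      · rw [h]
      · by_cases hv : r.val = 0
        · have : r = ⟨0, npos⟩ := Fin.ext hv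
          rw [this] at hr; exact hr.le
        · exact le_of_eq (hq ⟨0, npos⟩ (by rw [Fin.lt_def]; exact Nat.pos_of_ne_zero hv))
    have he0 : e ⟨0, npos⟩ = c := by
      apply Fin.ext
      have h0 : (⟨0, npos⟩ : Fin n).val + (k+1) < n := by show 0 + (k+1) < n; omega
      rw [hevhigh ⟨0, npos⟩ h0]
      show 0 + (k+1) = k+1
      omega
    have hkc : kk < c := by rw [Fin.lt_def]; simp [hkk, hc]
    have hJ0v : J ⟨0, npos⟩ = I c - I kk + N := by
      simp only [hJdef, he0, hfdef, if_pos hkc]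
    rw [hJ0v] at hJ0
    show I kk - I c ≤ (N:ℤ) - I ⟨0, npos⟩
    omega
  set g : ℕ → ℤ := fun j => I ⟨j % n, Nat.mod_lt j npos⟩ with hg
  have hsum := Finset.sum_range_sub' g (n-1)
  have hbd : ∀ i ∈ Finset.range (n-1), g i - g (i+1) ≤ (N:ℤ) - I ⟨0,npos⟩ := by
    intro i hi
    rw [Finset.mem_range] at hi
    have e1 : g i = I ⟨i, by omega⟩ := congrArg I (Fin.ext (Nat.mod_eq_of_lt (by omega)))
    have e2 : g (i+1) = I ⟨i+1, by omega⟩ := congrArg I (Fin.ext (Nat.mod_eq_of_lt (by omega)))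
    rw [e1, e2]
    exact gapstep i hi
  have hsum_le := Finset.sum_le_card_nsmul (Finset.range (n-1)) _ _ hbd
  rw [hsum, Finset.card_range] at hsum_le
  have hg0 : g 0 = I ⟨0, npos⟩ := congrArg I (Fin.ext (Nat.zero_mod n))
  have hgl : g (n-1) = 0 := by
    apply hlast
    simp only [hg]
    exact Nat.mod_eq_of_lt (by omega)
  rw [hg0, hgl, sub_zero, nsmul_eq_mul] at hsum_le
  have hcast : ((n - 1 : ℕ) : ℤ) = (n : ℤ) - 1 := by
    have : 1 ≤ n := by omega
    push_cast [this]; ring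
  rw [hcast] at hsum_le
  nlinarith [hsum_le]

set_option maxHeartbeats 1000000 in
/-- **Uniform control of `F` on orbit minima.** -/
theorem statement9 (n : ℕ) (hn : 3 ≤ n) (N : ℕ) (hnN : n ≤ N)
    (lam mu nu : Fin n → ℤ)
    (I : Fin n → ℤ) (hI : I ∈ JFinset n N)
    (hlast : ∀ r : Fin n, (r : ℕ) = n - 1 → I r = 0)
    (hmin : IsOrbitMin n N I) :
    ((N : ℝ) ^ ((n - 1) + (n - 1) * (n - 2) / 2))⁻¹ *
        ‖Fdet n N (fun r => (I r : ℝ)) lam mu nu‖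
      ≤ (n : ℝ) ^ (3 * n) *
          ((2 * (Real.sin (Real.pi * (1 - 1 / n)) / (1 - 1 / n))) ^ (n * (n - 1) / 2))⁻¹ /
          (vandZ I : ℝ) := by
  have npos : 0 < n := by omega
  have hNpos : (0:ℝ) < N := by
    have : 0 < N := by omega
    exact_mod_cast this
  have htop := top_bound n N hn hnN I hI hlast hmin
  have hI' := hI
  rw [JFinset, Finset.mem_filter, Fintype.mem_piFinset] at hI'
  obtain ⟨hmem, hdec⟩ := hI'
  have hmem' : ∀ r, 0 ≤ I r ∧ I r ≤ (N:ℤ) - 1 := fun r => Finset.mem_Icc.mp (hmem r)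
  have hn3 : (3:ℝ) ≤ (n:ℝ) := by exact_mod_cast hn
  set K := n * (n - 1) / 2 with hK
  rw [exps_eq n hn]
  set a : ℝ := 1 - 1/(n:ℝ) with hadef
  have ha0 : 0 < a := by
    have h1 : 1/(n:ℝ) ≤ 1/3 := by
      apply div_le_div_of_nonneg_left <;> linarith
    rw [hadef]; linarith
  have ha1 : a < 1 := by
    have : 0 < 1/(n:ℝ) := by positivity
    rw [hadef]; linarith
  set cst : ℝ := Real.sin (Real.pi * a) / a with hcstdef
  have hpi := Real.pi_pos
  have hsinpos : 0 < Real.sin (Real.pi * a) :=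
    Real.sin_pos_of_pos_of_lt_pi (by positivity) (by nlinarith)
  have hcstpos : 0 < cst := div_pos hsinpos ha0
  -- pairwise difference bounds
  have hdiff : ∀ p ∈ pairsLt n, (1:ℤ) ≤ I p.1 - I p.2 ∧
      ((I p.1 : ℝ) - (I p.2 : ℝ)) ≤ a * N := by
    intro p hp
    rw [pairsLt, Finset.mem_filter] at hp
    have hlt := hdec p.1 p.2 hp.2
    refine ⟨by omega, ?_⟩
    have h1 : I p.1 ≤ I ⟨0, npos⟩ := by
      by_cases hv : p.1 = ⟨0, npos⟩
      · rw [hv]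
      · have : (⟨0, npos⟩ : Fin n) < p.1 := by
          rw [Fin.lt_def]
          exact Nat.pos_of_ne_zero (fun h => hv (Fin.ext h))
        exact (hdec _ _ this).le
    have h2 : (0:ℤ) ≤ I p.2 := (hmem' p.2).1
    have h3 : (n:ℝ) * ((I ⟨0, npos⟩ : ℤ) : ℝ) ≤ ((n:ℝ) - 1) * N := by exact_mod_cast htop
    have h4 : ((I p.1 : ℤ) : ℝ) - ((I p.2 : ℤ) : ℝ) ≤ ((I ⟨0, npos⟩ : ℤ) : ℝ) := by
      have : I p.1 - I p.2 ≤ I ⟨0, npos⟩ := by omega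
      exact_mod_cast this
    have h5 : ((I ⟨0, npos⟩ : ℤ) : ℝ) ≤ a * N := by
      have hn' : (0:ℝ) < (n:ℝ) := by linarith
      have hq : (n:ℝ) * (a * N) = ((n:ℝ) - 1) * N := by
        rw [hadef]; field_simp
      have h6 : (n:ℝ) * ((I ⟨0, npos⟩ : ℤ) : ℝ) ≤ (n:ℝ) * (a * N) := by
        rw [hq]; exact h3
      exact le_of_mul_le_mul_left h6 hn'
    linarith
  -- positivity of vandZ
  have hvz : (0:ℤ) < vandZ I := by
    rw [vandZ]
    apply Finset.prod_pos
    intro p hp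
    have := (hdiff p hp).1
    omega
  have hvzR : (0:ℝ) < (vandZ I : ℝ) := by exact_mod_cast hvz
  -- lower bound on the Vandermonde factors
  set xs : Fin n → ℂ := fun r => Complex.exp (twoPiI * ((I r : ℝ) : ℂ) / (N : ℂ)) with hxsdef
  have hxs : ∀ r, xs r = Complex.exp (((2*Real.pi*((I r : ℤ):ℝ)/N : ℝ) : ℂ) * Complex.I) := by
    intro r
    have harg : twoPiI * ((I r : ℝ) : ℂ) / (N : ℂ)
        = ((2*Real.pi*((I r : ℤ):ℝ)/N : ℝ) : ℂ) * Complex.I := by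
      simp only [twoPiI]; push_cast; ring
    exact congrArg Complex.exp harg
  have hVfac : ∀ p ∈ pairsLt n,
      (2*cst/N) * (((I p.1 - I p.2 : ℤ)) : ℝ) ≤ ‖xs p.1 - xs p.2‖ := by
    intro p hp
    obtain ⟨hd1, hd2⟩ := hdiff p hp
    set d : ℝ := ((I p.1 : ℤ) : ℝ) - ((I p.2 : ℤ) : ℝ) with hddef
    have hd1R : (1:ℝ) ≤ d := by
      rw [hddef]
      exact_mod_cast hd1
    set x : ℝ := d / N with hxdef
    have hx0 : 0 < x := by positivity
    have hxa : x ≤ a := by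
      rw [hxdef, div_le_iff₀ hNpos]
      linarith
    rw [hxs p.1, hxs p.2, norm_exp_sub_exp]
    have harg : (2*Real.pi*((I p.1 : ℤ):ℝ)/N - 2*Real.pi*((I p.2 : ℤ):ℝ)/N)/2
        = Real.pi * x := by
      rw [hxdef, hddef]
      field_simp
    rw [harg]
    have hsx : |Real.sin (Real.pi * x)| = Real.sin (Real.pi * x) := by
      apply abs_of_nonneg
      apply (Real.sin_pos_of_pos_of_lt_pi (by positivity) (by nlinarith)).le
    rw [hsx]
    have hconc := sin_concave_bound x a hx0 hxa ha1
    have heq : (2*cst/N) * (((I p.1 - I p.2 : ℤ)) : ℝ) = 2 * (cst * x) := by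
      rw [hxdef, hddef]
      push_cast
      field_simp
    rw [heq, hcstdef]
    nlinarith [hconc]
  -- product lower bound
  have hVlow : (2*cst/N)^K * (vandZ I : ℝ) ≤ ‖vandC xs‖ := by
    rw [vandC, norm_prod]
    calc (2*cst/N)^K * (vandZ I : ℝ)
        = ∏ p ∈ pairsLt n, ((2*cst/N) * (((I p.1 - I p.2 : ℤ)) : ℝ)) := by
          rw [Finset.prod_mul_distrib, Finset.prod_const, card_pairsLt, ← hK]
          congr 1
          rw [vandZ]
          push_cast
          rfl
      _ ≤ ∏ p ∈ pairsLt n, ‖xs p.1 - xs p.2‖ := by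
          apply Finset.prod_le_prod
          · intro p hp
            have := (hdiff p hp).1
            have h1 : (0:ℝ) ≤ (((I p.1 - I p.2 : ℤ)) : ℝ) := by
              have : (0:ℤ) ≤ I p.1 - I p.2 := by omega
              exact_mod_cast this
            positivity
          · exact hVfac
  have hVpos : (0:ℝ) < ‖vandC xs‖ :=
    lt_of_lt_of_le (by positivity) hVlow
  -- determinant bounds
  have hent : ∀ (w : Fin n → ℤ) (r s : Fin n),
      ‖(Matrix.of fun r s : Fin n =>
        Complex.exp (twoPiI * ((I r : ℝ) : ℂ) * ((w s : ℂ) + ((s : ℕ) : ℂ)) / (N : ℂ))) r s‖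
        ≤ 1 := by
    intro w r s
    rw [Matrix.of_apply]
    have harg : twoPiI * ((I r : ℝ) : ℂ) * ((w s : ℂ) + ((s : ℕ) : ℂ)) / (N : ℂ)
        = ((2*Real.pi*((I r : ℤ):ℝ)*(((w s : ℤ):ℝ)+((s:ℕ):ℝ))/N : ℝ) : ℂ) * Complex.I := by
      simp only [twoPiI]
      push_cast
      ring
    rw [harg, norm_exp_I_eq_one]
  have hent3 : ∀ (r s : Fin n),
      ‖(Matrix.of fun r s : Fin n =>
        Complex.exp (-(twoPiI * ((I r : ℝ) : ℂ) * ((nu s : ℂ) + ((s : ℕ) : ℂ)) / (N : ℂ)))) r s‖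
        ≤ 1 := by
    intro r s
    rw [Matrix.of_apply]
    have harg : -(twoPiI * ((I r : ℝ) : ℂ) * ((nu s : ℂ) + ((s : ℕ) : ℂ)) / (N : ℂ))
        = ((-(2*Real.pi*((I r : ℤ):ℝ)*(((nu s : ℤ):ℝ)+((s:ℕ):ℝ))/N) : ℝ) : ℂ) * Complex.I := by
      simp only [twoPiI]
      push_cast
      ring
    rw [harg, norm_exp_I_eq_one]
  have hd1 := norm_det_le n _ (hent lam)
  have hd2 := norm_det_le n _ (hent mu)
  have hd3 := norm_det_le n _ hent3
  -- assemble
  have hFnorm : ‖Fdet n N (fun r => (I r : ℝ)) lam mu nu‖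
      = ‖(Matrix.of fun r s : Fin n =>
          Complex.exp (twoPiI * ((I r : ℝ) : ℂ) * ((lam s : ℂ) + ((s : ℕ) : ℂ)) / (N : ℂ))).det‖ *
        ‖(Matrix.of fun r s : Fin n =>
          Complex.exp (twoPiI * ((I r : ℝ) : ℂ) * ((mu s : ℂ) + ((s : ℕ) : ℂ)) / (N : ℂ))).det‖ *
        ‖(Matrix.of fun r s : Fin n =>
          Complex.exp (-(twoPiI * ((I r : ℝ) : ℂ) * ((nu s : ℂ) + ((s : ℕ) : ℂ)) / (N : ℂ)))).det‖ /
        ‖vandC xs‖ := by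
    rw [Fdet, norm_div, norm_mul, norm_mul]
  rw [hFnorm]
  set P1 := ‖(Matrix.of fun r s : Fin n =>
      Complex.exp (twoPiI * ((I r : ℝ) : ℂ) * ((lam s : ℂ) + ((s : ℕ) : ℂ)) / (N : ℂ))).det‖
  set P2 := ‖(Matrix.of fun r s : Fin n =>
      Complex.exp (twoPiI * ((I r : ℝ) : ℂ) * ((mu s : ℂ) + ((s : ℕ) : ℂ)) / (N : ℂ))).det‖
  set P3 := ‖(Matrix.of fun r s : Fin n =>
      Complex.exp (-(twoPiI * ((I r : ℝ) : ℂ) * ((nu s : ℂ) + ((s : ℕ) : ℂ)) / (N : ℂ)))).det‖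
  have hP : P1 * P2 * P3 ≤ (n:ℝ)^(3*n) := by
    have h1 : (n:ℝ)^(3*n) = (n:ℝ)^n * (n:ℝ)^n * (n:ℝ)^n := by
      rw [← pow_add, ← pow_add]
      congr 1
      ring
    rw [h1]
    have hn0 : (0:ℝ) ≤ (n:ℝ)^n := by positivity
    gcongr <;> first
      | exact norm_nonneg _
      | assumption
  have heqLHS : ((N:ℝ)^K)⁻¹ * (P1 * P2 * P3 / ‖vandC xs‖)
      = (P1 * P2 * P3) / ((N:ℝ)^K * ‖vandC xs‖) := by
    ring
  have heqRHS : (n : ℝ) ^ (3 * n) * ((2 * cst) ^ K)⁻¹ / (vandZ I : ℝ)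
      = (n : ℝ) ^ (3 * n) / ((2 * cst)^K * (vandZ I : ℝ)) := by
    ring
  rw [heqLHS, heqRHS]
  have hdeneq : (2*cst/N)^K * ((N:ℝ)^K) = (2*cst)^K := by
    rw [div_pow]
    field_simp
  have hden : (2 * cst)^K * (vandZ I : ℝ) ≤ (N:ℝ)^K * ‖vandC xs‖ := by
    calc (2 * cst)^K * (vandZ I : ℝ)
        = (N:ℝ)^K * ((2*cst/N)^K * (vandZ I : ℝ)) := by
          rw [← hdeneq]; ring
      _ ≤ (N:ℝ)^K * ‖vandC xs‖ := by
          apply mul_le_mul_of_nonneg_left hVlow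
          positivity
  exact div_le_div₀ (by positivity) hP (by positivity) hden
end
end

section
/- For every n ≥ 3, the series Σ_{I ∈ ℤ^n, I_1 > I_2 > … > I_{n−1} > I_n = 0} ∏_{1≤r<s≤n} (I_r − I_s)^{−1} converges (has finite sum). -/
open scoped BigOperators

noncomputable section

/-- Summability of products of per-coordinate weights over `Fin k → ℕ`. -/
lemma summable_pi_prod {g : ℕ → ℝ} (hg : Summable g) (hg0 : ∀ i, 0 ≤ g i) :
    ∀ k : ℕ, Summable (fun x : Fin k → ℕ => ∏ j, g (x j)) := by
  intro k
  induction k with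
  | zero =>
      have : (fun x : Fin 0 → ℕ => ∏ j, g (x j)) = fun _ => 1 := by
        funext x; simp
      rw [this]
      exact Summable.of_finite
  | succ k ih =>
      have h2 := hg.mul_of_nonneg ih hg0 (fun x => Finset.prod_nonneg fun j _ => hg0 _)
      have h3 := h2.comp_injective (Fin.consEquiv (fun _ : Fin (k+1) => ℕ)).symm.injective
      have h4 : ((fun p : ℕ × (Fin k → ℕ) => g p.1 * ∏ j, g (p.2 j)) ∘
          (Fin.consEquiv (fun _ : Fin (k+1) => ℕ)).symm) = fun x : Fin (k+1) → ℕ => ∏ j, g (x j) := by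
        funext x
        show g (x 0) * ∏ j : Fin k, g (Fin.tail x j) = _
        rw [Fin.prod_univ_succ]
        rfl
      rwa [h4] at h3

/-- AM-GM style bound. -/
lemma amgm_inv {a b : ℝ} (ha : 1 ≤ a) (hb : 1 ≤ b) :
    (a + b)⁻¹ ≤ (Real.sqrt a)⁻¹ * (Real.sqrt b)⁻¹ := by
  rw [← mul_inv]
  have hsab : 0 < Real.sqrt a * Real.sqrt b := by
    have := Real.sqrt_pos.mpr (show (0:ℝ) < a by linarith)
    have := Real.sqrt_pos.mpr (show (0:ℝ) < b by linarith)
    positivity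
  apply inv_anti₀ hsab
  rw [← Real.sqrt_mul (by linarith)]
  calc Real.sqrt (a * b) ≤ Real.sqrt ((a + b) ^ 2) := Real.sqrt_le_sqrt (by nlinarith)
  _ = a + b := Real.sqrt_sq (by linarith)

lemma rpow_three_half {x : ℝ} (hx : 1 ≤ x) :
    1 / x ^ ((3:ℝ)/2) = (x * Real.sqrt x)⁻¹ := by
  have hx0 : (0:ℝ) < x := by linarith
  have h32 : ((3:ℝ)/2) = 1 + 1/2 := by norm_num
  rw [one_div, h32, Real.rpow_add hx0, Real.rpow_one, ← Real.sqrt_eq_rpow]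

/-- For every `n ≥ 3`, the series
`Σ_{I_1 > … > I_{n-1} > I_n = 0} ∏_{r<s} (I_r − I_s)^{-1}` converges. -/
theorem statement10 (n : ℕ) (hn : 3 ≤ n) :
    Summable (fun l : DecSet n =>
      ∏ p ∈ pairsLt n, (((l.1 p.1 - l.1 p.2 : ℤ) : ℝ))⁻¹) := by
  obtain ⟨c, rfl⟩ : ∃ c, n = c + 3 := ⟨n - 3, by omega⟩
  -- weight function
  set G : ℕ → ℝ := fun i => 1 / (i : ℝ) ^ ((3:ℝ)/2) with hGdef
  have hGsum : Summable G :=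
    Real.summable_one_div_nat_rpow.mpr (by norm_num)
  have hG0 : ∀ i, 0 ≤ G i := fun i => by
    simp only [hGdef]
    positivity
  have hpi := summable_pi_prod hGsum hG0 (c + 2)
  -- the gap map
  set Φ : ↥(DecSet (c+3)) → (Fin (c+2) → ℕ) :=
    fun l j => (l.1 j.castSucc - l.1 j.succ).toNat with hΦdef
  have hgap : ∀ (l : ↥(DecSet (c+3))) (j : Fin (c+2)),
      1 ≤ l.1 j.castSucc - l.1 j.succ := by
    intro l j
    have := l.2.1 j.castSucc j.succ (Fin.castSucc_lt_succ (i := j))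
    omega
  have hΦinj : Function.Injective Φ := by
    intro I1 I2 h
    have hd : ∀ j : Fin (c+2),
        I1.1 j.castSucc - I1.1 j.succ = I2.1 j.castSucc - I2.1 j.succ := by
      intro j
      have h1 := hgap I1 j
      have h2 := hgap I2 j
      have h3 := congrFun h j
      simp only [hΦdef] at h3
      omega
    have key : ∀ k : ℕ, k ≤ c + 2 → ∀ h' : c + 2 - k < c + 3,
        I1.1 ⟨c + 2 - k, h'⟩ = I2.1 ⟨c + 2 - k, h'⟩ := by
      intro k
      induction k with
      | zero =>
          intro _ h'
          simp only [Nat.sub_zero] at h' ⊢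
          rw [I1.2.2 ⟨c+2, h'⟩ (by simp), I2.2.2 ⟨c+2, h'⟩ (by simp)]
      | succ k ih =>
          intro hk h'
          have hk' : k ≤ c + 2 := by omega
          have ha : c + 2 - k < c + 3 := by omega
          have hIH := ih hk' ha
          have hj : c + 2 - (k+1) < c + 2 := by omega
          have hd' := hd ⟨c + 2 - (k+1), hj⟩
          have e1 : (Fin.castSucc ⟨c + 2 - (k+1), hj⟩ : Fin (c+3)) = ⟨c + 2 - (k+1), h'⟩ := by
            ext; simp
          have e2 : (Fin.succ ⟨c + 2 - (k+1), hj⟩ : Fin (c+3)) = ⟨c + 2 - k, ha⟩ := by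
            ext; simp; omega
          rw [e1, e2] at hd'
          omega
    apply Subtype.ext
    funext r
    have hrlt := r.isLt
    have hr : r = ⟨c + 2 - (c + 2 - r.1), by omega⟩ := by
      ext; simp; omega
    rw [hr]
    exact key (c + 2 - r.1) (by omega) _
  refine Summable.of_nonneg_of_le ?_ ?_ (hpi.comp_injective hΦinj)
  · intro l
    apply Finset.prod_nonneg
    intro p hp
    have hplt : p.1 < p.2 := (Finset.mem_filter.mp hp).2
    have : (0:ℤ) < l.1 p.1 - l.1 p.2 := by
      have := l.2.1 p.1 p.2 hplt
      omega
    have : (0:ℝ) < ((l.1 p.1 - l.1 p.2 : ℤ) : ℝ) := by exact_mod_cast this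
    positivity
  · intro l
    -- notation
    set D : Fin (c+2) → ℤ := fun j => l.1 j.castSucc - l.1 j.succ with hDdef
    have hD1 : ∀ j, 1 ≤ D j := fun j => hgap l j
    have hD1R : ∀ j, (1:ℝ) ≤ (D j : ℝ) := fun j => by exact_mod_cast hD1 j
    -- value of the dominating function
    have hRHS : ((fun x : Fin (c+2) → ℕ => ∏ j, G (x j)) ∘ Φ) l
        = ∏ j, ((D j : ℝ) * Real.sqrt (D j))⁻¹ := by
      simp only [Function.comp_apply]
      apply Finset.prod_congr rfl
      intro j _
      have h0 : ((Φ l j : ℤ)) = D j := Int.toNat_of_nonneg (by have := hgap l j; omega)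
      have h1 : ((Φ l j : ℕ) : ℝ) = (D j : ℝ) := by exact_mod_cast h0
      rw [hGdef]
      simp only
      rw [h1, rpow_three_half (hD1R j)]
    rw [hRHS]
    -- bounds on individual factors
    have ht_pos : ∀ p ∈ pairsLt (c+3), (0:ℝ) < ((l.1 p.1 - l.1 p.2 : ℤ) : ℝ) := by
      intro p hp
      have hplt : p.1 < p.2 := (Finset.mem_filter.mp hp).2
      have := l.2.1 p.1 p.2 hplt
      exact_mod_cast (by omega : (0:ℤ) < l.1 p.1 - l.1 p.2)
    have ht_ge1 : ∀ p ∈ pairsLt (c+3), (1:ℝ) ≤ ((l.1 p.1 - l.1 p.2 : ℤ) : ℝ) := by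
      intro p hp
      have hplt : p.1 < p.2 := (Finset.mem_filter.mp hp).2
      have := l.2.1 p.1 p.2 hplt
      exact_mod_cast (by omega : (1:ℤ) ≤ l.1 p.1 - l.1 p.2)
    -- the two families of pairs
    set A : Finset (Fin (c+3) × Fin (c+3)) :=
      Finset.image (fun j : Fin (c+2) => (j.castSucc, j.succ)) Finset.univ with hAdef
    set B : Finset (Fin (c+3) × Fin (c+3)) :=
      Finset.image (fun j : Fin (c+1) => (j.castSucc.castSucc, j.succ.succ)) Finset.univ with hBdef
    have hAsub : A ⊆ pairsLt (c+3) := by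
      intro p hp
      simp only [hAdef, Finset.mem_image, Finset.mem_univ, true_and] at hp
      obtain ⟨j, rfl⟩ := hp
      exact Finset.mem_filter.mpr ⟨Finset.mem_univ _, Fin.castSucc_lt_succ (i := j)⟩
    have hBsub : B ⊆ pairsLt (c+3) := by
      intro p hp
      simp only [hBdef, Finset.mem_image, Finset.mem_univ, true_and] at hp
      obtain ⟨j, rfl⟩ := hp
      refine Finset.mem_filter.mpr ⟨Finset.mem_univ _, ?_⟩
      rw [Fin.lt_def]
      simp only [Fin.coe_castSucc, Fin.val_succ]
      omega
    have hABsub : A ∪ B ⊆ pairsLt (c+3) := Finset.union_subset hAsub hBsub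
    have hABdisj : Disjoint A B := by
      rw [Finset.disjoint_left]
      intro p hpA hpB
      simp only [hAdef, hBdef, Finset.mem_image, Finset.mem_univ, true_and] at hpA hpB
      obtain ⟨j, hj⟩ := hpA
      obtain ⟨k, hk⟩ := hpB
      rw [← hj] at hk
      have v1 := congrArg (fun q : Fin (c+3) × Fin (c+3) => q.1.val) hk
      have v2 := congrArg (fun q : Fin (c+3) × Fin (c+3) => q.2.val) hk
      simp only [Fin.coe_castSucc, Fin.val_succ] at v1 v2
      omega
    -- products over A and B
    have hA_prod : (∏ p ∈ A, ((l.1 p.1 - l.1 p.2 : ℤ) : ℝ)⁻¹) = ∏ j, ((D j : ℝ))⁻¹ := by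
      rw [hAdef, Finset.prod_image ?inj]
      case inj =>
        intro j _ k _ h
        have hv := congrArg (fun q : Fin (c+3) × Fin (c+3) => q.1.val) h
        simp only [Fin.coe_castSucc] at hv
        exact Fin.ext hv
    have hB_prod : (∏ p ∈ B, ((l.1 p.1 - l.1 p.2 : ℤ) : ℝ)⁻¹)
        = ∏ j : Fin (c+1), (((D j.castSucc : ℝ)) + (D j.succ : ℝ))⁻¹ := by
      rw [hBdef, Finset.prod_image ?inj2]
      case inj2 =>
        intro j _ k _ h
        have hv := congrArg (fun q : Fin (c+3) × Fin (c+3) => q.1.val) h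
        simp only [Fin.coe_castSucc] at hv
        exact Fin.ext hv
      apply Finset.prod_congr rfl
      intro j _
      have hkey : l.1 j.castSucc.castSucc - l.1 j.succ.succ
          = D j.castSucc + D j.succ := by
        rw [hDdef]
        simp only
        rw [Fin.succ_castSucc]
        ring
      rw [hkey]
      push_cast
      ring
    -- bound ∏ over B by product of inverse square roots
    have hsqrt1 : ∀ j : Fin (c+2), (1:ℝ) ≤ Real.sqrt (D j) :=
      fun j => Real.one_le_sqrt.mpr (hD1R j)
    have hsqrt_inv_le1 : ∀ j : Fin (c+2), (Real.sqrt (D j))⁻¹ ≤ 1 := by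
      intro j
      rw [inv_le_one_iff₀]
      right; exact hsqrt1 j
    have hsqrt_inv_nonneg : ∀ j : Fin (c+2), (0:ℝ) ≤ (Real.sqrt (D j))⁻¹ := by
      intro j
      positivity
    have hB_le : (∏ j : Fin (c+1), (((D j.castSucc : ℝ)) + (D j.succ : ℝ))⁻¹)
        ≤ ∏ j : Fin (c+2), (Real.sqrt (D j))⁻¹ := by
      calc (∏ j : Fin (c+1), (((D j.castSucc : ℝ)) + (D j.succ : ℝ))⁻¹)
          ≤ ∏ j : Fin (c+1), ((Real.sqrt (D j.castSucc))⁻¹ * (Real.sqrt (D j.succ))⁻¹) := by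
            apply Finset.prod_le_prod
            · intro j _
              have := hD1R j.castSucc
              have := hD1R j.succ
              positivity
            · intro j _
              exact amgm_inv (hD1R j.castSucc) (hD1R j.succ)
        _ = (∏ j : Fin (c+1), (Real.sqrt (D j.castSucc))⁻¹)
            * ∏ j : Fin (c+1), (Real.sqrt (D j.succ))⁻¹ := Finset.prod_mul_distrib
        _ ≤ (Real.sqrt (D 0))⁻¹ * ∏ j : Fin (c+1), (Real.sqrt (D j.succ))⁻¹ := by
            apply mul_le_mul_of_nonneg_right
            · calc (∏ j : Fin (c+1), (Real.sqrt (D j.castSucc))⁻¹)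
                  = (Real.sqrt (D (0 : Fin (c+1)).castSucc))⁻¹
                    * ∏ j : Fin c, (Real.sqrt (D j.succ.castSucc))⁻¹ :=
                    Fin.prod_univ_succ (fun j : Fin (c+1) => (Real.sqrt (D j.castSucc))⁻¹)
                _ ≤ (Real.sqrt (D (0 : Fin (c+1)).castSucc))⁻¹ * 1 := by
                    apply mul_le_mul_of_nonneg_left
                    · exact Finset.prod_le_one (fun j _ => hsqrt_inv_nonneg _)
                        (fun j _ => hsqrt_inv_le1 _)
                    · exact hsqrt_inv_nonneg _
                _ = (Real.sqrt (D 0))⁻¹ := by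
                    rw [mul_one, Fin.castSucc_zero]
            · exact Finset.prod_nonneg fun j _ => hsqrt_inv_nonneg _
        _ = ∏ j : Fin (c+2), (Real.sqrt (D j))⁻¹ :=
            (Fin.prod_univ_succ (fun j : Fin (c+2) => (Real.sqrt (D j))⁻¹)).symm
    -- main chain
    calc (∏ p ∈ pairsLt (c+3), ((l.1 p.1 - l.1 p.2 : ℤ) : ℝ)⁻¹)
        ≤ ∏ p ∈ A ∪ B, ((l.1 p.1 - l.1 p.2 : ℤ) : ℝ)⁻¹ := by
          rw [← Finset.prod_sdiff hABsub]
          apply mul_le_of_le_one_left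
          · exact Finset.prod_nonneg fun p hp =>
              le_of_lt (inv_pos.mpr (ht_pos p (hABsub hp)))
          · apply Finset.prod_le_one
            · intro p hp
              exact le_of_lt (inv_pos.mpr (ht_pos p (Finset.mem_sdiff.mp hp).1))
            · intro p hp
              rw [inv_le_one_iff₀]
              right; exact ht_ge1 p (Finset.mem_sdiff.mp hp).1
      _ = (∏ p ∈ A, ((l.1 p.1 - l.1 p.2 : ℤ) : ℝ)⁻¹)
          * ∏ p ∈ B, ((l.1 p.1 - l.1 p.2 : ℤ) : ℝ)⁻¹ := Finset.prod_union hABdisj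
      _ ≤ (∏ j, ((D j : ℝ))⁻¹) * ∏ j : Fin (c+2), (Real.sqrt (D j))⁻¹ := by
          rw [hA_prod, hB_prod]
          apply mul_le_mul_of_nonneg_left hB_le
          exact Finset.prod_nonneg fun j _ => by
            have := hD1R j; positivity
      _ = ∏ j, ((D j : ℝ) * Real.sqrt (D j))⁻¹ := by
          rw [← Finset.prod_mul_distrib]
          apply Finset.prod_congr rfl
          intro j _
          rw [mul_inv]
end
end
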